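/- Variance recursion for the optimally controlled wealth: under the Bellman-type strategy π*, for every t < s ≤ T, Var[X^{π*}(s)] = r(s−1)²·Var[X^{π*}(s−1)] + (β(s−1)/(4μ²))·(∏_{h=s−1}^{T−1} r(h))⁻², with Var[X^{π*}(t)] = 0. -/

import Mathlib

open MeasureTheory ProbabilityTheory Matrix Finset

noncomputable section

namespace MeanVarianceModel

variable {Ω : Type*} [MeasurableSpace Ω] {n d : ℕ}

/-- The wealth process `X^π`: `X^π(t) = x` and, for `s > t`,
`X^π(s) = r(s−1)·X^π(s−1) + γ(s−1)·π(s−1) + π(s−1)·(σ(s−1)ξ(s−1))`. -/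
def wealthAux (r : ℕ → ℝ) (γ : ℕ → Fin n → ℝ) (σm : ℕ → Matrix (Fin n) (Fin d) ℝ)
    (ξ : ℕ → Ω → Fin d → ℝ) (π : ℕ → Ω → Fin n → ℝ) (t : ℕ) (x : ℝ) :
    ℕ → Ω → ℝ
  | 0 => fun _ => x
  | k + 1 => fun ω =>
      r (t + k) * wealthAux r γ σm ξ π t x k ω + γ (t + k) ⬝ᵥ π (t + k) ω
        + π (t + k) ω ⬝ᵥ (σm (t + k) *ᵥ ξ (t + k) ω)

/-- Wealth at (absolute) time `s`, started at time `t` from `x`. -/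
def wealth (r : ℕ → ℝ) (γ : ℕ → Fin n → ℝ) (σm : ℕ → Matrix (Fin n) (Fin d) ℝ)
    (ξ : ℕ → Ω → Fin d → ℝ) (π : ℕ → Ω → Fin n → ℝ) (t : ℕ) (x : ℝ) (s : ℕ) :
    Ω → ℝ :=
  wealthAux r γ σm ξ π t x (s - t)

/-- The deterministic auxiliary sequence `Y^π`: `Y^π(t) = y` and
`Y^π(s) = r(s−1)·Y^π(s−1) + γ(s−1)·E[π(s−1)]` for `s > t`. -/
def meanWealthAux (P : Measure Ω) (r : ℕ → ℝ) (γ : ℕ → Fin n → ℝ)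
    (π : ℕ → Ω → Fin n → ℝ) (t : ℕ) (y : ℝ) : ℕ → ℝ
  | 0 => y
  | k + 1 =>
      r (t + k) * meanWealthAux P r γ π t y k
        + γ (t + k) ⬝ᵥ (fun i => ∫ ω, π (t + k) ω i ∂P)

/-- `Y^π` at (absolute) time `s`, started at time `t` from `y`. -/
def meanWealth (P : Measure Ω) (r : ℕ → ℝ) (γ : ℕ → Fin n → ℝ)
    (π : ℕ → Ω → Fin n → ℝ) (t : ℕ) (y : ℝ) (s : ℕ) : ℝ :=
  meanWealthAux P r γ π t y (s - t)

/-- The filtration `𝒢_s` generated by `ξ(t), …, ξ(s−1)`. -/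
def filt (ξ : ℕ → Ω → Fin d → ℝ) (t s : ℕ) : MeasurableSpace Ω :=
  ⨆ h ∈ Set.Ico t s, MeasurableSpace.comap (ξ h) inferInstance

/-- An admissible strategy on `{t, …, T−1}`: each `π(s)` is square-integrable and
`𝒢_s`-measurable. -/
def Admissible (P : Measure Ω) (ξ : ℕ → Ω → Fin d → ℝ) (t T : ℕ)
    (π : ℕ → Ω → Fin n → ℝ) : Prop :=
  ∀ s, t ≤ s → s < T → MemLp (π s) 2 P ∧ Measurable[filt ξ t s] (π s)

/-- The cost `J̃(t,x,y,μ;π) = μ·E[(X^π(T) − Y^π(T))²] − E[X^π(T)]`. -/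
def cost (P : Measure Ω) (r : ℕ → ℝ) (γ : ℕ → Fin n → ℝ)
    (σm : ℕ → Matrix (Fin n) (Fin d) ℝ) (ξ : ℕ → Ω → Fin d → ℝ)
    (t T : ℕ) (μ x y : ℝ) (π : ℕ → Ω → Fin n → ℝ) : ℝ :=
  μ * ∫ ω, (wealth r γ σm ξ π t x T ω - meanWealth P r γ π t y T) ^ 2 ∂P
    - ∫ ω, wealth r γ σm ξ π t x T ω ∂P

/-- The value function `V^μ(t,x,y)`: infimum of the cost over admissible strategies. -/
def value (P : Measure Ω) (r : ℕ → ℝ) (γ : ℕ → Fin n → ℝ)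
    (σm : ℕ → Matrix (Fin n) (Fin d) ℝ) (ξ : ℕ → Ω → Fin d → ℝ)
    (T : ℕ) (μ : ℝ) (t : ℕ) (x y : ℝ) : ℝ :=
  sInf { c | ∃ π : ℕ → Ω → Fin n → ℝ,
    Admissible P ξ t T π ∧ c = cost P r γ σm ξ t T μ x y π }

/-- The risk premium `β(s) = γ(s)ᵀ(σ(s)σ(s)ᵀ)⁻¹γ(s)`. -/
def riskPremium (γ : ℕ → Fin n → ℝ) (σm : ℕ → Matrix (Fin n) (Fin d) ℝ) (s : ℕ) : ℝ :=
  γ s ⬝ᵥ ((σm s * (σm s)ᵀ)⁻¹ *ᵥ γ s)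

/-- The Bellman type dynamic optimal strategy
`π*(s) = (1/(2μ))·(σ(s)σ(s)ᵀ)⁻¹γ(s)·(∏_{h=s}^{T−1} r(h))⁻¹` (deterministic). -/
def bellmanStrategy (r : ℕ → ℝ) (γ : ℕ → Fin n → ℝ)
    (σm : ℕ → Matrix (Fin n) (Fin d) ℝ) (T : ℕ) (μ : ℝ) :
    ℕ → Ω → Fin n → ℝ :=
  fun s _ => ((1 / (2 * μ)) * (∏ h ∈ Finset.Ico s T, r h)⁻¹) •
    ((σm s * (σm s)ᵀ)⁻¹ *ᵥ γ s)

/-- The standard Gaussian measure on `ℝ^d` (product of standard real Gaussians). -/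
def stdGaussian (d : ℕ) : Measure (Fin d → ℝ) :=
  Measure.pi fun _ => gaussianReal 0 1

end MeanVarianceModel

namespace MVAux

open MeasureTheory ProbabilityTheory Real Filter MeanVarianceModel
open scoped NNReal ENNReal

/-! ### Moments of the one-dimensional standard Gaussian -/

lemma gauss_m1 : ∫ x : ℝ, x * Real.exp (-(1/2 : ℝ) * x ^ 2) = 0 := by
  have h := integral_neg_eq_self (fun y : ℝ => y * Real.exp (-(1/2 : ℝ) * y ^ 2))
    (volume : Measure ℝ)
  have h2 : (fun x : ℝ => (-x) * Real.exp (-(1/2:ℝ) * (-x) ^ 2))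
      = fun x : ℝ => -(x * Real.exp (-(1/2:ℝ) * x ^ 2)) := by
    funext y; rw [neg_sq]; ring
  simp only [h2, integral_neg] at h
  linarith

lemma gauss_m2 : ∫ x : ℝ, x ^ 2 * Real.exp (-(1/2 : ℝ) * x ^ 2) = Real.sqrt (2 * π) := by
  have hd : ∀ x : ℝ, HasDerivAt (fun y : ℝ => -(y * Real.exp (-(1/2:ℝ) * y ^ 2)))
      (x ^ 2 * Real.exp (-(1/2:ℝ) * x ^ 2) - Real.exp (-(1/2:ℝ) * x ^ 2)) x := by
    intro x
    have h1 : HasDerivAt (fun y : ℝ => -(1/2:ℝ) * y ^ 2) (-x) x := by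
      simpa using ((hasDerivAt_pow 2 x).const_mul (-(1/2:ℝ)))
    have h3 := ((hasDerivAt_id x).mul h1.exp).neg
    refine h3.congr_deriv ?_
    simp only [id]
    ring
  have hi2 : Integrable (fun x : ℝ => x ^ 2 * Real.exp (-(1/2:ℝ) * x ^ 2)) := by
    have := integrable_rpow_mul_exp_neg_mul_sq (b := (1/2:ℝ)) (by norm_num) (s := 2) (by norm_num)
    simpa [Real.rpow_natCast] using this
  have hi0 : Integrable (fun x : ℝ => Real.exp (-(1/2:ℝ) * x ^ 2)) :=
    integrable_exp_neg_mul_sq (by norm_num)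
  have hint := hi2.sub hi0
  have hlo := rpow_mul_exp_neg_mul_sq_isLittleO_exp_neg (b := (1/2:ℝ)) (by norm_num) 1
  have htop : Tendsto (fun x : ℝ => -(x * Real.exp (-(1/2:ℝ) * x ^ 2))) atTop (nhds 0) := by
    have h0 : Tendsto (fun x : ℝ => Real.exp (-(1/2:ℝ) * x)) atTop (nhds 0) := by
      apply Real.tendsto_exp_atBot.comp
      apply Tendsto.const_mul_atTop_of_neg (by norm_num)
      exact tendsto_id
    have := hlo.trans_tendsto h0
    simp only [Real.rpow_one] at this
    simpa using this.neg
  have hbot : Tendsto (fun x : ℝ => -(x * Real.exp (-(1/2:ℝ) * x ^ 2))) atBot (nhds 0) := by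
    have h1 : Tendsto (fun x : ℝ => -(-x * Real.exp (-(1/2:ℝ) * x ^ 2))) atTop (nhds 0) := by
      have := htop.neg
      simp only [neg_neg, neg_zero] at this ⊢
      simpa [neg_mul] using this
    have h2 := h1.comp tendsto_neg_atBot_atTop
    have : (fun x : ℝ => -(-x * Real.exp (-(1/2:ℝ) * x ^ 2))) ∘ (fun x : ℝ => -x)
        = fun x : ℝ => -(x * Real.exp (-(1/2:ℝ) * x ^ 2)) := by
      funext x; simp [Function.comp]
    rwa [this] at h2
  have key := integral_of_hasDerivAt_of_tendsto hd hint hbot htop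
  simp only [sub_zero] at key
  have hg : ∫ x : ℝ, Real.exp (-(1/2:ℝ) * x ^ 2) = Real.sqrt (2 * π) := by
    rw [integral_gaussian]
    rw [show π / (1/2:ℝ) = 2 * π by ring]
  rw [integral_sub hi2 hi0, hg] at key
  linarith

lemma gaussianPDFReal01 (x : ℝ) :
    gaussianPDFReal 0 1 x = (Real.sqrt (2 * π))⁻¹ * Real.exp (-(1/2:ℝ) * x ^ 2) := by
  rw [gaussianPDFReal]
  norm_num
  left
  ring_nf

lemma withDensity_gaussian01 :
    gaussianReal 0 1 = (volume : Measure ℝ).withDensity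
      (fun x => ((Real.toNNReal (gaussianPDFReal 0 1 x) : ℝ≥0) : ℝ≥0∞)) := by
  rw [gaussianReal_of_var_ne_zero _ one_ne_zero]
  congr 1

lemma integral_gaussianReal01 (f : ℝ → ℝ) :
    ∫ x, f x ∂(gaussianReal 0 1) =
      (Real.sqrt (2 * π))⁻¹ * ∫ x, f x * Real.exp (-(1/2:ℝ) * x ^ 2) := by
  rw [withDensity_gaussian01,
    integral_withDensity_eq_integral_smul (measurable_gaussianPDFReal 0 1).real_toNNReal f]
  have : ∀ x : ℝ, (Real.toNNReal (gaussianPDFReal 0 1 x)) • f x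
      = (Real.sqrt (2*π))⁻¹ * (f x * Real.exp (-(1/2:ℝ) * x ^ 2)) := by
    intro x
    rw [NNReal.smul_def, smul_eq_mul, Real.coe_toNNReal _ (gaussianPDFReal_nonneg 0 1 x),
      gaussianPDFReal01]
    ring
  simp only [this]
  rw [integral_const_mul]

lemma integrable_gaussianReal01 (f : ℝ → ℝ)
    (hf : AEStronglyMeasurable f (gaussianReal 0 1))
    (hif : Integrable (fun x => f x * Real.exp (-(1/2:ℝ) * x ^ 2))) :
    Integrable f (gaussianReal 0 1) := by
  rw [gaussianReal_of_var_ne_zero _ one_ne_zero] at hf ⊢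
  rw [integrable_withDensity_iff (measurable_gaussianPDF 0 1)
    (ae_of_all _ fun x => by rw [gaussianPDF]; exact ENNReal.ofReal_lt_top)]
  have : (fun x => f x * (gaussianPDF 0 1 x).toReal)
      = fun x => (Real.sqrt (2*π))⁻¹ * (f x * Real.exp (-(1/2:ℝ) * x ^ 2)) := by
    funext x
    rw [gaussianPDF, ENNReal.toReal_ofReal (gaussianPDFReal_nonneg 0 1 x), gaussianPDFReal01]
    ring
  rw [this]
  exact hif.const_mul _

lemma integral_id_gaussianReal01 : ∫ x, x ∂(gaussianReal 0 1) = 0 := by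
  rw [integral_gaussianReal01 (fun x => x), gauss_m1, mul_zero]

lemma integral_sq_gaussianReal01 : ∫ x, x ^ 2 ∂(gaussianReal 0 1) = 1 := by
  rw [integral_gaussianReal01 (fun x => x ^ 2), gauss_m2]
  rw [inv_mul_cancel₀]
  positivity

lemma integrable_id_gaussianReal01 : Integrable (fun x : ℝ => x) (gaussianReal 0 1) := by
  apply integrable_gaussianReal01 _ measurable_id.aestronglyMeasurable
  have := integrable_rpow_mul_exp_neg_mul_sq (b := (1/2:ℝ)) (by norm_num) (s := 1) (by norm_num)
  simpa [Real.rpow_one] using this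

lemma integrable_sq_gaussianReal01 : Integrable (fun x : ℝ => x ^ 2) (gaussianReal 0 1) := by
  apply integrable_gaussianReal01 _ (measurable_id.pow_const 2).aestronglyMeasurable
  have := integrable_rpow_mul_exp_neg_mul_sq (b := (1/2:ℝ)) (by norm_num) (s := 2) (by norm_num)
  simpa [Real.rpow_natCast] using this

/-! ### Coordinate moments of the standard Gaussian on `ℝ^d` -/

instance (d : ℕ) : IsProbabilityMeasure (stdGaussian d) := by
  unfold MeanVarianceModel.stdGaussian; infer_instance

variable {d : ℕ}

lemma stdGaussian_eq_volume (d : ℕ) :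
    letI : MeasureSpace ℝ := ⟨gaussianReal 0 1⟩
    stdGaussian d = (volume : Measure (Fin d → ℝ)) := by
  letI : MeasureSpace ℝ := ⟨gaussianReal 0 1⟩
  rw [volume_pi]
  rfl

lemma integrable_coord_mul (j k : Fin d) :
    Integrable (fun v : Fin d → ℝ => v j * v k) (stdGaussian d) := by
  letI : MeasureSpace ℝ := ⟨gaussianReal 0 1⟩
  haveI : SigmaFinite (volume : Measure ℝ) :=
    inferInstanceAs (SigmaFinite (gaussianReal 0 1))
  haveI : IsFiniteMeasure (volume : Measure ℝ) :=
    inferInstanceAs (IsFiniteMeasure (gaussianReal 0 1))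
  rw [stdGaussian_eq_volume]
  by_cases hjk : j = k
  · subst hjk
    have h : (fun v : Fin d → ℝ => v j * v j)
        = fun v => ∏ i, (if i = j then (v i) ^ 2 else 1) := by
      funext v
      rw [Finset.prod_ite_eq' Finset.univ j (fun i => (v i) ^ 2)]
      simp [sq]
    rw [h]
    exact Integrable.fintype_prod (f := fun i x => if i = j then x ^ 2 else 1)
      (fun i => by
        by_cases hij : i = j
        · simpa [hij] using (show Integrable (fun x : ℝ => x ^ 2) volume from integrable_sq_gaussianReal01)
        · simpa [hij] using integrable_const (1:ℝ))
  · have h : (fun v : Fin d → ℝ => v j * v k)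
        = fun v => ∏ i, (if i = j then v i else if i = k then v i else 1) := by
      funext v
      rw [← Finset.prod_subset (Finset.subset_univ {j, k})
        (fun i _ hi => by
          simp only [Finset.mem_insert, Finset.mem_singleton, not_or] at hi
          simp [hi.1, hi.2]),
        Finset.prod_pair hjk]
      simp [hjk, Ne.symm hjk]
    rw [h]
    exact Integrable.fintype_prod (f := fun i x => if i = j then x else if i = k then x else 1)
      (fun i => by
        by_cases hij : i = j
        · simpa [hij] using (show Integrable (fun x : ℝ => x) volume from integrable_id_gaussianReal01)
        · by_cases hik : i = k
          · simpa [hij, hik] using (show Integrable (fun x : ℝ => x) volume from integrable_id_gaussianReal01)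
          · simpa [hij, hik] using integrable_const (1:ℝ))

lemma integral_coord_mul (j k : Fin d) :
    ∫ v, v j * v k ∂(stdGaussian d) = if j = k then 1 else 0 := by
  letI : MeasureSpace ℝ := ⟨gaussianReal 0 1⟩
  haveI : SigmaFinite (volume : Measure ℝ) :=
    inferInstanceAs (SigmaFinite (gaussianReal 0 1))
  rw [stdGaussian_eq_volume]
  by_cases hjk : j = k
  · subst hjk
    have h : (fun v : Fin d → ℝ => v j * v j)
        = fun v => ∏ i, (if i = j then (v i) ^ 2 else 1) := by
      funext v
      rw [Finset.prod_ite_eq' Finset.univ j (fun i => (v i) ^ 2)]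
      simp [sq]
    rw [if_pos rfl, h, volume_pi, MeasureTheory.integral_fintype_prod_eq_prod (𝕜 := ℝ)
      (fun i x => if i = j then x ^ 2 else 1)]
    rw [Finset.prod_eq_one]
    intro i _
    by_cases hij : i = j
    · subst hij
      simpa using integral_sq_gaussianReal01
    · haveI : IsProbabilityMeasure (volume : Measure ℝ) :=
        inferInstanceAs (IsProbabilityMeasure (gaussianReal 0 1))
      simp [hij]
  · have h : (fun v : Fin d → ℝ => v j * v k)
        = fun v => ∏ i, (if i = j then v i else if i = k then v i else 1) := by
      funext v
      rw [← Finset.prod_subset (Finset.subset_univ {j, k})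
        (fun i _ hi => by
          simp only [Finset.mem_insert, Finset.mem_singleton, not_or] at hi
          simp [hi.1, hi.2]),
        Finset.prod_pair hjk]
      simp [hjk, Ne.symm hjk]
    rw [if_neg hjk, h, volume_pi, MeasureTheory.integral_fintype_prod_eq_prod (𝕜 := ℝ)
      (fun i x => if i = j then x else if i = k then x else 1)]
    apply Finset.prod_eq_zero (Finset.mem_univ j)
    simpa using integral_id_gaussianReal01

lemma integrable_coord (j : Fin d) :
    Integrable (fun v : Fin d → ℝ => v j) (stdGaussian d) := by
  letI : MeasureSpace ℝ := ⟨gaussianReal 0 1⟩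
  haveI : SigmaFinite (volume : Measure ℝ) :=
    inferInstanceAs (SigmaFinite (gaussianReal 0 1))
  haveI : IsFiniteMeasure (volume : Measure ℝ) :=
    inferInstanceAs (IsFiniteMeasure (gaussianReal 0 1))
  rw [stdGaussian_eq_volume]
  have h : (fun v : Fin d → ℝ => v j) = fun v => ∏ i, (if i = j then v i else 1) := by
    funext v
    rw [Finset.prod_ite_eq' Finset.univ j (fun i => v i)]
    simp
  rw [h]
  exact Integrable.fintype_prod (f := fun i x => if i = j then x else 1)
    (fun i => by
      by_cases hij : i = j
      · simpa [hij] using (show Integrable (fun x : ℝ => x) volume from integrable_id_gaussianReal01)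
      · simpa [hij] using integrable_const (1:ℝ))

lemma integral_coord (j : Fin d) : ∫ v, v j ∂(stdGaussian d) = 0 := by
  letI : MeasureSpace ℝ := ⟨gaussianReal 0 1⟩
  haveI : SigmaFinite (volume : Measure ℝ) :=
    inferInstanceAs (SigmaFinite (gaussianReal 0 1))
  rw [stdGaussian_eq_volume]
  have h : (fun v : Fin d → ℝ => v j) = fun v => ∏ i, (if i = j then v i else 1) := by
    funext v
    rw [Finset.prod_ite_eq' Finset.univ j (fun i => v i)]
    simp
  rw [h, volume_pi, MeasureTheory.integral_fintype_prod_eq_prod (𝕜 := ℝ)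
    (fun i x => if i = j then x else 1)]
  apply Finset.prod_eq_zero (Finset.mem_univ j)
  simpa using integral_id_gaussianReal01

/-! ### Dot products against a standard Gaussian vector -/

lemma measurable_dot (a : Fin d → ℝ) : Measurable (fun v : Fin d → ℝ => a ⬝ᵥ v) := by
  unfold dotProduct
  exact Finset.measurable_sum _ (fun j _ => (measurable_pi_apply j).const_mul _)

lemma integrable_dot (a : Fin d → ℝ) :
    Integrable (fun v : Fin d → ℝ => a ⬝ᵥ v) (stdGaussian d) := by
  unfold dotProduct
  exact integrable_finset_sum _ (fun j _ => (integrable_coord j).const_mul _)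

lemma integral_dot (a : Fin d → ℝ) : ∫ v, a ⬝ᵥ v ∂(stdGaussian d) = 0 := by
  unfold dotProduct
  rw [integral_finset_sum _ (fun j _ => (integrable_coord j).const_mul _)]
  apply Finset.sum_eq_zero
  intro j _
  rw [integral_const_mul, integral_coord, mul_zero]

lemma dot_sq_expand (a : Fin d → ℝ) (v : Fin d → ℝ) :
    (a ⬝ᵥ v) ^ 2 = ∑ j, ∑ k, (a j * a k) * (v j * v k) := by
  unfold dotProduct
  rw [sq, Finset.sum_mul_sum]
  apply Finset.sum_congr rfl
  intro j _
  apply Finset.sum_congr rfl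
  intro k _
  ring

lemma integrable_dot_sq (a : Fin d → ℝ) :
    Integrable (fun v : Fin d → ℝ => (a ⬝ᵥ v) ^ 2) (stdGaussian d) := by
  simp only [dot_sq_expand]
  exact integrable_finset_sum _ (fun j _ =>
    integrable_finset_sum _ (fun k _ => (integrable_coord_mul j k).const_mul _))

lemma integral_dot_sq (a : Fin d → ℝ) :
    ∫ v, (a ⬝ᵥ v) ^ 2 ∂(stdGaussian d) = a ⬝ᵥ a := by
  simp only [dot_sq_expand]
  rw [integral_finset_sum _ (fun j _ =>
    integrable_finset_sum _ (fun k _ => (integrable_coord_mul j k).const_mul _))]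
  have : ∀ j : Fin d, ∫ v, ∑ k, (a j * a k) * (v j * v k) ∂(stdGaussian d)
      = a j * a j := by
    intro j
    rw [integral_finset_sum _ (fun k _ => (integrable_coord_mul j k).const_mul _)]
    have : ∀ k : Fin d, ∫ v, (a j * a k) * (v j * v k) ∂(stdGaussian d)
        = if j = k then a j * a k else 0 := by
      intro k
      rw [integral_const_mul, integral_coord_mul]
      by_cases hjk : j = k <;> simp [hjk]
    simp only [this]
    simp
  simp only [this]
  rfl

/-! ### Pullback along a Gaussian random vector -/

variable {Ω : Type*} [MeasurableSpace Ω] {P : Measure Ω}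

lemma integral_comp {X : Ω → Fin d → ℝ} (hX : Measurable X)
    (hmap : Measure.map X P = stdGaussian d) (g : (Fin d → ℝ) → ℝ) (hg : Measurable g) :
    ∫ ω, g (X ω) ∂P = ∫ v, g v ∂(stdGaussian d) := by
  rw [← hmap, integral_map hX.aemeasurable hg.aestronglyMeasurable]

lemma integrable_comp {X : Ω → Fin d → ℝ} (hX : Measurable X)
    (hmap : Measure.map X P = stdGaussian d) (g : (Fin d → ℝ) → ℝ) (hg : Measurable g)
    (hint : Integrable g (stdGaussian d)) :
    Integrable (fun ω => g (X ω)) P := by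
  rw [← hmap] at hint
  exact (integrable_map_measure hg.aestronglyMeasurable hX.aemeasurable).mp hint

/-! ### Product of two `L²` functions is integrable -/

lemma integrable_mul_of_L2 {A B : Ω → ℝ} (hA : MemLp A 2 P) (hB : MemLp B 2 P) :
    Integrable (fun ω => A ω * B ω) P := by
  have h1 := (hA.add hB).integrable_sq
  have h2 := hA.integrable_sq
  have h3 := hB.integrable_sq
  have h4 := ((h1.sub h2).sub h3).div_const 2
  exact h4.congr (Filter.EventuallyEq.of_eq (by
    funext ω
    simp only [Pi.sub_apply, Pi.add_apply]
    ring))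

/-! ### Independence of a sum of past noise from the next noise -/

lemma indep_sum_dot (P : Measure Ω)
    {t T : ℕ} (ξ : ℕ → Ω → Fin d → ℝ)
    (hmeas : ∀ s, t ≤ s → s < T → Measurable (ξ s))
    (hindep : iIndepFun
      (fun i : Set.Ico t T => ξ i) P)
    (k : ℕ) (htk : t ≤ k) (hkT : k < T)
    (g : ℕ → (Fin d → ℝ) → ℝ) (hg : ∀ h, Measurable (g h))
    (f : (Fin d → ℝ) → ℝ) (hf : Measurable f) :
    IndepFun (fun ω => ∑ h ∈ Finset.Ico t k, g h (ξ h ω)) (fun ω => f (ξ k ω)) P := by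
  classical
  set ι := ↥(Set.Ico t T)
  haveI : Fintype ι := Set.Ico t T |>.toFinite.fintype
  set S : Finset ι := Finset.univ.filter (fun i : ι => (i : ℕ) < k) with hS
  set T' : Finset ι := Finset.univ.filter (fun i : ι => (i : ℕ) = k) with hT'
  have hdisj : Disjoint S T' := by
    rw [Finset.disjoint_left]
    intro i hiS hiT
    rw [hS, Finset.mem_filter] at hiS
    rw [hT', Finset.mem_filter] at hiT
    omega
  have h0 := hindep.indepFun_finset S T' hdisj (fun i => hmeas i i.2.1 i.2.2)
  set i₀ : ι := ⟨k, ⟨htk, hkT⟩⟩ with hi₀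
  have hi₀T : i₀ ∈ T' := by simp [hT', hi₀]
  let φ : ({x : ι // x ∈ S} → Fin d → ℝ) → ℝ := fun v => ∑ i : {x : ι // x ∈ S}, g (i : ℕ) (v i)
  let ψ : ({x : ι // x ∈ T'} → Fin d → ℝ) → ℝ := fun v => f (v ⟨i₀, hi₀T⟩)
  have hφ : Measurable φ :=
    Finset.measurable_sum _ (fun i _ => (hg _).comp (measurable_pi_apply i))
  have hψ : Measurable ψ := hf.comp (measurable_pi_apply _)
  have h1 := h0.comp hφ hψ
  have e1 : (φ ∘ fun ω (i : {x : ι // x ∈ S}) => ξ (i : ℕ) ω)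
      = fun ω => ∑ h ∈ Finset.Ico t k, g h (ξ h ω) := by
    funext ω
    show ∑ i : {x : ι // x ∈ S}, g ((i : ι) : ℕ) (ξ ((i : ι) : ℕ) ω) = _
    rw [Finset.sum_coe_sort S (fun i : ι => g (i : ℕ) (ξ (i : ℕ) ω))]
    apply Finset.sum_nbij' (i := fun i : ι => (i : ℕ))
      (j := fun h => if hh : h ∈ Finset.Ico t k then
        (⟨h, ⟨(Finset.mem_Ico.mp hh).1,
          lt_of_lt_of_le (Finset.mem_Ico.mp hh).2 (le_of_lt hkT)⟩⟩ : ι) else i₀)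
    · intro i hi
      rw [hS, Finset.mem_filter] at hi
      exact Finset.mem_Ico.mpr ⟨i.2.1, hi.2⟩
    · intro h hh
      rw [hS, Finset.mem_filter]
      simp only [hh, dif_pos]
      exact ⟨Finset.mem_univ _, (Finset.mem_Ico.mp hh).2⟩
    · intro i hi
      rw [hS, Finset.mem_filter] at hi
      have : (i : ℕ) ∈ Finset.Ico t k := Finset.mem_Ico.mpr ⟨i.2.1, hi.2⟩
      simp [this]
      rfl
    · intro h hh
      simp [hh]
    · intro i hi
      rfl
  have e2 : (ψ ∘ fun ω (i : {x : ι // x ∈ T'}) => ξ (i : ℕ) ω) = fun ω => f (ξ k ω) := rfl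
  rw [e1, e2] at h1
  exact h1

/-! ### Deterministic part of the wealth process -/

def detW (r : ℕ → ℝ) (K : ℕ → ℝ) (t : ℕ) (x : ℝ) : ℕ → ℝ
  | 0 => x
  | k + 1 => r (t + k) * detW r K t x k + K (t + k)

end MVAux


open MeanVarianceModel

/-- Variance recursion for the optimally controlled wealth: under the Bellman-type
strategy `π*`, writing `Var[X^{π*}(s)] = E[(X^{π*}(s) − E[X^{π*}(s)])²]`, one has
`Var[X^{π*}(t)] = 0` and, for `t < s ≤ T`,
`Var[X^{π*}(s)] = r(s−1)²·Var[X^{π*}(s−1)] + (β(s−1)/(4μ²))·(∏_{h=s−1}^{T−1} r h)⁻²`. -/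
theorem variance_recursion_of_optimal_wealth
    {Ω : Type*} [MeasurableSpace Ω]
    (P : Measure Ω) [IsProbabilityMeasure P]
    (n d : ℕ) (hn : 1 ≤ n) (hd : 1 ≤ d)
    (t T : ℕ) (htT : t < T)
    (r : ℕ → ℝ) (γ : ℕ → Fin n → ℝ) (σm : ℕ → Matrix (Fin n) (Fin d) ℝ)
    (hr : ∀ s, t ≤ s → s < T → 0 < r s)
    (hγ : ∀ s, t ≤ s → s < T → γ s ≠ 0)
    (hσ : ∀ s, t ≤ s → s < T → (σm s * (σm s)ᵀ).PosDef)
    (ξ : ℕ → Ω → Fin d → ℝ)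
    (hξmeas : ∀ s, t ≤ s → s < T → Measurable (ξ s))
    (hξindep : iIndepFun
      (fun i : Set.Ico t T => ξ i) P)
    (hξgauss : ∀ s, t ≤ s → s < T → Measure.map (ξ s) P = stdGaussian d)
    (μ x : ℝ) (hμ : 0 < μ) :
    (∫ ω, (wealth r γ σm ξ (bellmanStrategy (Ω := Ω) r γ σm T μ) t x t ω
        - ∫ ω', wealth r γ σm ξ (bellmanStrategy (Ω := Ω) r γ σm T μ) t x t ω' ∂P) ^ 2 ∂P
      = 0) ∧
    ∀ s, t < s → s ≤ T →
      ∫ ω, (wealth r γ σm ξ (bellmanStrategy (Ω := Ω) r γ σm T μ) t x s ω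
          - ∫ ω', wealth r γ σm ξ (bellmanStrategy (Ω := Ω) r γ σm T μ) t x s ω' ∂P) ^ 2 ∂P
        = r (s - 1) ^ 2 *
            ∫ ω, (wealth r γ σm ξ (bellmanStrategy (Ω := Ω) r γ σm T μ) t x (s - 1) ω
              - ∫ ω', wealth r γ σm ξ (bellmanStrategy (Ω := Ω) r γ σm T μ) t x (s - 1) ω' ∂P) ^ 2 ∂P
          + (riskPremium γ σm (s - 1) / (4 * μ ^ 2)) *
              ((∏ h ∈ Finset.Ico (s - 1) T, r h)⁻¹) ^ 2 := by
  classical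
  set π : ℕ → Ω → Fin n → ℝ := bellmanStrategy (Ω := Ω) r γ σm T μ with hπ
  set a : ℕ → Fin d → ℝ := fun h => (σm h)ᵀ *ᵥ
    (((1 / (2 * μ)) * (∏ j ∈ Finset.Ico h T, r j)⁻¹) • ((σm h * (σm h)ᵀ)⁻¹ *ᵥ γ h)) with ha
  set K : ℕ → ℝ := fun h => γ h ⬝ᵥ
    (((1 / (2 * μ)) * (∏ j ∈ Finset.Ico h T, r j)⁻¹) • ((σm h * (σm h)ᵀ)⁻¹ *ᵥ γ h)) with hK
  set Y : ℕ → Ω → ℝ := fun h ω => a h ⬝ᵥ ξ h ω with hY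
  set N : ℕ → Ω → ℝ := fun s ω =>
    ∑ h ∈ Finset.Ico t s, (∏ j ∈ Finset.Ico (h + 1) s, r j) * Y h ω with hN
  -- the noise term of the wealth recursion is `Y`
  have hdot : ∀ h (v : Fin d → ℝ),
      (((1 / (2 * μ)) * (∏ j ∈ Finset.Ico h T, r j)⁻¹) • ((σm h * (σm h)ᵀ)⁻¹ *ᵥ γ h))
        ⬝ᵥ (σm h *ᵥ v) = a h ⬝ᵥ v := by
    intro h v
    simp only [ha]
    rw [Matrix.dotProduct_mulVec, Matrix.mulVec_transpose]
  -- pointwise decomposition of the wealth into deterministic part plus noise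
  have hdecomp : ∀ k (ω : Ω), wealthAux r γ σm ξ π t x k ω
      = MVAux.detW r K t x k
        + ∑ h ∈ Finset.Ico t (t + k), (∏ j ∈ Finset.Ico (h + 1) (t + k), r j) * Y h ω := by
    intro k
    induction k with
    | zero =>
      intro ω
      simp [wealthAux, MVAux.detW]
    | succ k ih =>
      intro ω
      show r (t + k) * wealthAux r γ σm ξ π t x k ω + γ (t + k) ⬝ᵥ π (t + k) ω
          + π (t + k) ω ⬝ᵥ (σm (t + k) *ᵥ ξ (t + k) ω) = _
      have hπval : π (t + k) ω = ((1 / (2 * μ)) * (∏ j ∈ Finset.Ico (t + k) T, r j)⁻¹)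
          • ((σm (t + k) * (σm (t + k))ᵀ)⁻¹ *ᵥ γ (t + k)) := rfl
      rw [ih ω, hπval, hdot (t + k) (ξ (t + k) ω)]
      have hsum : ∑ h ∈ Finset.Ico t (t + (k + 1)),
          (∏ j ∈ Finset.Ico (h + 1) (t + (k + 1)), r j) * Y h ω
          = r (t + k) * ∑ h ∈ Finset.Ico t (t + k),
              (∏ j ∈ Finset.Ico (h + 1) (t + k), r j) * Y h ω + Y (t + k) ω := by
        rw [show t + (k + 1) = (t + k) + 1 from rfl,
          Finset.sum_Ico_succ_top (Nat.le_add_right t k), Finset.mul_sum]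
        congr 1
        · apply Finset.sum_congr rfl
          intro h hh
          rw [Finset.mem_Ico] at hh
          rw [Finset.prod_Ico_succ_top (Nat.succ_le_of_lt hh.2)]
          ring
        · rw [Finset.Ico_self, Finset.prod_empty, one_mul]
      rw [hsum]
      show _ = MVAux.detW r K t x (k + 1) + _
      rw [show MVAux.detW r K t x (k + 1) = r (t + k) * MVAux.detW r K t x k + K (t + k)
        from rfl]
      rw [hK]
      have : Y (t + k) ω = a (t + k) ⬝ᵥ ξ (t + k) ω := rfl
      rw [this]
      ring
  -- basic facts about `Y`
  have hameas : ∀ h, Measurable (fun v : Fin d → ℝ => a h ⬝ᵥ v) :=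
    fun h => MVAux.measurable_dot _
  have hYmeas : ∀ h, t ≤ h → h < T → Measurable (Y h) :=
    fun h h1 h2 => (hameas h).comp (hξmeas h h1 h2)
  have hYint : ∀ h, t ≤ h → h < T → Integrable (Y h) P := fun h h1 h2 =>
    MVAux.integrable_comp (hξmeas h h1 h2) (hξgauss h h1 h2) _ (hameas h)
      (MVAux.integrable_dot _)
  have hYzero : ∀ h, t ≤ h → h < T → ∫ ω, Y h ω ∂P = 0 := by
    intro h h1 h2
    rw [show (fun ω => Y h ω) = fun ω => (fun v => a h ⬝ᵥ v) (ξ h ω) from rfl]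
    rw [MVAux.integral_comp (hξmeas h h1 h2) (hξgauss h h1 h2) _ (hameas h)]
    exact MVAux.integral_dot _
  have hYsqint : ∀ h, t ≤ h → h < T → Integrable (fun ω => Y h ω ^ 2) P := fun h h1 h2 =>
    MVAux.integrable_comp (hξmeas h h1 h2) (hξgauss h h1 h2)
      (fun v => (a h ⬝ᵥ v) ^ 2) ((hameas h).pow_const 2) (MVAux.integrable_dot_sq _)
  have hYsq : ∀ h, t ≤ h → h < T → ∫ ω, Y h ω ^ 2 ∂P = a h ⬝ᵥ a h := by
    intro h h1 h2
    rw [show (fun ω => Y h ω ^ 2) = fun ω => (fun v => (a h ⬝ᵥ v) ^ 2) (ξ h ω) from rfl,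
      MVAux.integral_comp (hξmeas h h1 h2) (hξgauss h h1 h2) _ ((hameas h).pow_const 2)]
    exact MVAux.integral_dot_sq _
  have hYmem : ∀ h, t ≤ h → h < T → MemLp (Y h) 2 P := fun h h1 h2 =>
    (memLp_two_iff_integrable_sq (hYmeas h h1 h2).aestronglyMeasurable).mpr (hYsqint h h1 h2)
  -- basic facts about `N`
  have hNmem : ∀ s, s ≤ T → MemLp (N s) 2 P := by
    intro s hsT
    rw [hN]
    apply memLp_finset_sum
    intro h hh
    rw [Finset.mem_Ico] at hh
    exact (hYmem h hh.1 (lt_of_lt_of_le hh.2 hsT)).const_mul _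
  have hNint : ∀ s, s ≤ T → Integrable (N s) P := fun s hsT =>
    (hNmem s hsT).integrable one_le_two
  have hNzero : ∀ s, s ≤ T → ∫ ω, N s ω ∂P = 0 := by
    intro s hsT
    rw [hN]
    rw [integral_finset_sum _ (fun h hh => by
      rw [Finset.mem_Ico] at hh
      exact (hYint h hh.1 (lt_of_lt_of_le hh.2 hsT)).const_mul _)]
    apply Finset.sum_eq_zero
    intro h hh
    rw [Finset.mem_Ico] at hh
    rw [integral_const_mul, hYzero h hh.1 (lt_of_lt_of_le hh.2 hsT), mul_zero]
  -- expectation of the wealth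
  have hEwealth : ∀ s, t ≤ s → s ≤ T →
      ∫ ω, wealth r γ σm ξ π t x s ω ∂P = MVAux.detW r K t x (s - t) := by
    intro s h1 h2
    show ∫ ω, wealthAux r γ σm ξ π t x (s - t) ω ∂P = _
    simp only [hdecomp (s - t), show t + (s - t) = s from Nat.add_sub_cancel' h1]
    rw [integral_add (integrable_const _) (hNint s h2)]
    rw [integral_const, hNzero s h2, probReal_univ]
    simp
  -- centered wealth equals the noise part
  have hw : ∀ s, t ≤ s → s ≤ T → ∀ ω : Ω,
      wealth r γ σm ξ π t x s ω - ∫ ω', wealth r γ σm ξ π t x s ω' ∂P = N s ω := by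
    intro s h1 h2 ω
    rw [hEwealth s h1 h2]
    show wealthAux r γ σm ξ π t x (s - t) ω - _ = _
    rw [hdecomp (s - t), show t + (s - t) = s from Nat.add_sub_cancel' h1]
    ring
  constructor
  · -- variance at time `t` is zero
    have h0 : ∀ ω : Ω, wealth r γ σm ξ π t x t ω
        - ∫ ω', wealth r γ σm ξ π t x t ω' ∂P = 0 := by
      intro ω
      rw [hw t le_rfl (le_of_lt htT) ω, hN]
      simp
    simp only [h0]
    simp
  · intro s hts hsT
    set k := s - 1 with hk
    have hsk : s = k + 1 := by omega
    have htk : t ≤ k := by omega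
    have hkT : k < T := by omega
    have hkT' : k ≤ T := le_of_lt hkT
    -- rewrite both integrands via the noise part
    simp only [hw s (le_of_lt hts) hsT, hw k (by omega) hkT']
    -- one-step recursion for the noise part
    have hNs : ∀ ω : Ω, N s ω = r k * N k ω + Y k ω := by
      intro ω
      simp only [hN, hsk]
      rw [Finset.sum_Ico_succ_top htk, Finset.mul_sum]
      congr 1
      · apply Finset.sum_congr rfl
        intro h hh
        rw [Finset.mem_Ico] at hh
        rw [Finset.prod_Ico_succ_top (Nat.succ_le_of_lt hh.2)]
        ring
      · rw [Finset.Ico_self, Finset.prod_empty, one_mul]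
    simp only [hNs]
    have hexp : ∀ ω : Ω, (r k * N k ω + Y k ω) ^ 2
        = r k ^ 2 * N k ω ^ 2 + (2 * r k) * (N k ω * Y k ω) + Y k ω ^ 2 := by
      intro ω; ring
    simp only [hexp]
    have I1 : Integrable (fun ω => N k ω ^ 2) P := (hNmem k hkT').integrable_sq
    have I2 : Integrable (fun ω => N k ω * Y k ω) P :=
      MVAux.integrable_mul_of_L2 (hNmem k hkT') (hYmem k htk hkT)
    have I3 : Integrable (fun ω => Y k ω ^ 2) P := hYsqint k htk hkT
    have I1' : Integrable (fun ω => r k ^ 2 * N k ω ^ 2) P := I1.const_mul _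
    have I2' : Integrable (fun ω => (2 * r k) * (N k ω * Y k ω)) P := I2.const_mul _
    have I12 : Integrable (fun ω => r k ^ 2 * N k ω ^ 2
        + (2 * r k) * (N k ω * Y k ω)) P := I1'.add I2'
    rw [integral_add I12 I3, integral_add I1' I2', integral_const_mul, integral_const_mul]
    -- the cross term vanishes by independence
    have hindepNY : IndepFun (N k) (Y k) P := by
      have h := MVAux.indep_sum_dot P ξ hξmeas hξindep k htk hkT
        (g := fun h v => (∏ j ∈ Finset.Ico (h + 1) k, r j) * (a h ⬝ᵥ v))
        (fun h => ((hameas h).const_mul _))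
        (fun v => a k ⬝ᵥ v) (hameas k)
      have e1 : (fun ω => ∑ h ∈ Finset.Ico t k,
          (fun h v => (∏ j ∈ Finset.Ico (h + 1) k, r j) * (a h ⬝ᵥ v)) h (ξ h ω)) = N k := by
        funext ω
        rw [hN]
      have e2 : (fun ω => (fun v => a k ⬝ᵥ v) (ξ k ω)) = Y k := by
        funext ω
        rw [hY]
      rwa [e1, e2] at h
    have hcross : ∫ ω, N k ω * Y k ω ∂P = 0 := by
      have h2 := hindepNY.integral_mul_eq_mul_integral (hNint k hkT').aestronglyMeasurable
          (hYint k htk hkT).aestronglyMeasurable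
      rw [hNzero k hkT', zero_mul] at h2
      exact h2
    rw [hcross, mul_zero, add_zero, hYsq k htk hkT]
    -- matrix algebra for the noise variance
    have halg : a k ⬝ᵥ a k = riskPremium γ σm k / (4 * μ ^ 2)
        * ((∏ h ∈ Finset.Ico k T, r h)⁻¹) ^ 2 := by
      simp only [ha]
      set M := σm k with hM
      set q := (∏ h ∈ Finset.Ico k T, r h)⁻¹ with hq
      set c := (1 / (2 * μ)) * q with hc
      set u := (M * Mᵀ)⁻¹ *ᵥ γ k with hu
      rw [Matrix.mulVec_smul, smul_dotProduct, dotProduct_smul]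
      have hww : (Mᵀ *ᵥ u) ⬝ᵥ (Mᵀ *ᵥ u) = riskPremium γ σm k := by
        nth_rewrite 1 [Matrix.mulVec_transpose]
        rw [Matrix.dotProduct_mulVec, Matrix.vecMul_vecMul]
        have hAT : (M * Mᵀ)ᵀ = M * Mᵀ := by
          rw [Matrix.transpose_mul, Matrix.transpose_transpose]
        rw [hu, Matrix.dotProduct_mulVec, Matrix.vecMul_vecMul,
          Matrix.mul_nonsing_inv _ ((hσ k htk hkT).det_pos.ne'.isUnit), Matrix.vecMul_one,
          dotProduct_comm, hM]
        rfl
      rw [hww, smul_eq_mul, smul_eq_mul, hc]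
      have hμne : μ ≠ 0 := ne_of_gt hμ
      field_simp
      ring
    rw [halg]
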